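/- Let G be a finite group and let H and K be CD-subgroups of G. Then the subgroup generated by H and K equals the set product HK, and this subgroup ⟨H,K⟩ = HK is a CD-subgroup of G. -/
import Mathlib


open Pointwise

/-- The Chermak–Delgado index-measure of a subgroup `H` of `G`:
`m(G,H) = |G:H| * |G:C_G(H)|`. -/
noncomputable def cdMeasure {G : Type*} [Group G] (H : Subgroup G) : ℕ :=
  H.index * (Subgroup.centralizer (H : Set G)).index

/-- `μ(G)`, the minimum of `m(G,H)` over all subgroups `H ≤ G`. -/
noncomputable def cdMu (G : Type*) [Group G] : ℕ :=
  sInf {n : ℕ | ∃ H : Subgroup G, cdMeasure H = n}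

/-- A subgroup `H ≤ G` is a CD-subgroup if `m(G,H) = μ(G)`. -/
def IsCDSubgroup {G : Type*} [Group G] (H : Subgroup G) : Prop :=
  cdMeasure H = cdMu G

section aux

variable {G : Type*} [Group G]

/-- `|HK| * |H ⊓ K| = |H| * |K|`, via orbit-stabilizer for the action
`(h,k) • g = h * g * k⁻¹` of `H × K` on `G`. -/
lemma cd_key_card (H K : Subgroup G) :
    Nat.card ((H : Set G) * (K : Set G) : Set G) * Nat.card (H ⊓ K : Subgroup G)
      = Nat.card H * Nat.card K := by
  letI : MulAction (H × K) G :=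
    { smul := fun p g => (p.1 : G) * g * (p.2 : G)⁻¹
      one_smul := fun g => by
        show ((1 : H) : G) * g * ((1 : K) : G)⁻¹ = g
        simp
      mul_smul := fun p q g => by
        show ((p.1 * q.1 : H) : G) * g * ((p.2 * q.2 : K) : G)⁻¹
            = (p.1 : G) * ((q.1 : G) * g * (q.2 : G)⁻¹) * (p.2 : G)⁻¹
        push_cast
        group }
  have horb : MulAction.orbit (H × K) (1 : G) = (H : Set G) * (K : Set G) := by
    ext x
    constructor
    · rintro ⟨p, rfl⟩
      show (p.1 : G) * 1 * (p.2 : G)⁻¹ ∈ _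
      exact ⟨p.1, p.1.2, (p.2 : G)⁻¹, K.inv_mem p.2.2, by group⟩
    · rintro ⟨h, hh, k, hk, rfl⟩
      exact ⟨(⟨h, hh⟩, ⟨k⁻¹, K.inv_mem hk⟩), by show h * 1 * (k⁻¹)⁻¹ = h * k; group⟩
  have hstab : Nat.card (MulAction.stabilizer (H × K) (1 : G)) = Nat.card (H ⊓ K : Subgroup G) := by
    apply Nat.card_congr
    refine ⟨fun q => ⟨(q.1.1 : G), q.1.1.2, ?_⟩,
      fun d => ⟨(⟨(d : G), d.2.1⟩, ⟨(d : G), d.2.2⟩), ?_⟩, ?_, ?_⟩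
    · have hq : (q.1.1 : G) * 1 * (q.1.2 : G)⁻¹ = 1 := q.2
      have : (q.1.1 : G) = (q.1.2 : G) := by
        rw [mul_one] at hq
        exact (mul_inv_eq_one.mp hq)
      rw [this]; exact q.1.2.2
    · show (d : G) * 1 * (d : G)⁻¹ = 1
      group
    · intro q
      have hq : (q.1.1 : G) * 1 * (q.1.2 : G)⁻¹ = 1 := q.2
      rw [mul_one] at hq
      exact Subtype.ext (Prod.ext (Subtype.ext rfl) (Subtype.ext (mul_inv_eq_one.mp hq)))
    · intro d; rfl
  have := Nat.card_congr (MulAction.orbitProdStabilizerEquivGroup (H × K) (1 : G))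
  rw [Nat.card_prod, Nat.card_prod] at this
  rw [← horb, ← hstab]
  exact this

/-- `C_G(⟨H,K⟩) = C_G(H) ∩ C_G(K)`. -/
lemma cd_centralizer_sup (H K : Subgroup G) :
    Subgroup.centralizer ((H ⊔ K : Subgroup G) : Set G)
      = Subgroup.centralizer (H : Set G) ⊓ Subgroup.centralizer (K : Set G) := by
  apply le_antisymm
  · exact le_inf (Subgroup.centralizer_le (SetLike.coe_subset_coe.mpr le_sup_left))
      (Subgroup.centralizer_le (SetLike.coe_subset_coe.mpr le_sup_right))
  · rw [← Subgroup.le_centralizer_iff]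
    exact sup_le (Subgroup.le_centralizer_iff.mp inf_le_left)
      (Subgroup.le_centralizer_iff.mp inf_le_right)

/-- The "multiplicative" Chermak–Delgado measure `|L| * |C_G(L)|`. -/
noncomputable def cdF (L : Subgroup G) : ℕ :=
  Nat.card L * Nat.card (Subgroup.centralizer (L : Set G))

lemma cd_measure_mul_cdF [Finite G] (A : Subgroup G) :
    cdMeasure A * cdF A = Nat.card G * Nat.card G := by
  rw [cdMeasure, cdF, mul_mul_mul_comm, Subgroup.index_mul_card, Subgroup.index_mul_card]

lemma cdMu_le (L : Subgroup G) : cdMu G ≤ cdMeasure L :=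
  Nat.sInf_le ⟨L, rfl⟩

end aux

theorem stmt_3 {G : Type*} [Group G] [Finite G] (H K : Subgroup G)
    (hH : IsCDSubgroup H) (hK : IsCDSubgroup K) :
    ((H ⊔ K : Subgroup G) : Set G) = (H : Set G) * (K : Set G) ∧
      IsCDSubgroup (H ⊔ K) := by
  classical
  have hH' : cdMeasure H = cdMu G := hH
  have hK' : cdMeasure K = cdMu G := hK
  set N := Nat.card G with hN
  have hN2 : 0 < N * N := Nat.mul_pos Nat.card_pos Nat.card_pos
  have hμpos : 0 < cdMu G := by
    have h0 := cd_measure_mul_cdF H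
    rw [hH'] at h0
    rcases Nat.eq_zero_or_pos (cdMu G) with h | h
    · rw [h, zero_mul] at h0; exact absurd h0.symm hN2.ne'
    · exact h
  have hμH : cdMu G * cdF H = N * N := by rw [← hH']; exact cd_measure_mul_cdF H
  have hfle : ∀ L : Subgroup G, cdF L ≤ cdF H := by
    intro L
    have h1 : cdMu G * cdF L ≤ N * N := by
      calc cdMu G * cdF L ≤ cdMeasure L * cdF L := Nat.mul_le_mul (cdMu_le L) le_rfl
        _ = N * N := cd_measure_mul_cdF L
    rw [← hμH] at h1
    exact Nat.le_of_mul_le_mul_left h1 hμpos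
  have hfHK : cdF H = cdF K := by
    have h2 : cdMu G * cdF K = N * N := by rw [← hK']; exact cd_measure_mul_cdF K
    exact Nat.eq_of_mul_eq_mul_left hμpos (hμH.trans h2.symm)
  set CH := Subgroup.centralizer (H : Set G) with hCH
  set CK := Subgroup.centralizer (K : Set G) with hCKdef
  set a := Nat.card ((H : Set G) * (K : Set G) : Set G) with ha_def
  set a' := Nat.card (H ⊔ K : Subgroup G) with ha'_def
  set c := Nat.card (H ⊓ K : Subgroup G) with hc_def
  set b := Nat.card ((CH : Set G) * (CK : Set G) : Set G) with hb_def
  set b' := Nat.card (Subgroup.centralizer ((H ⊓ K : Subgroup G) : Set G)) with hb'_def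
  set d := Nat.card (Subgroup.centralizer ((H ⊔ K : Subgroup G) : Set G)) with hd_def
  have h1 : a * c = Nat.card H * Nat.card K := cd_key_card H K
  have h2 : b * d = Nat.card CH * Nat.card CK := by
    have h := cd_key_card CH CK
    rw [← cd_centralizer_sup H K] at h
    exact h
  have hsub : (H : Set G) * (K : Set G) ⊆ ((H ⊔ K : Subgroup G) : Set G) := by
    rw [Subgroup.sup_eq_closure_mul]
    exact Subgroup.subset_closure
  have haa' : a ≤ a' := by
    calc a ≤ Nat.card (((H ⊔ K : Subgroup G) : Set G)) :=
          Nat.card_mono (Set.toFinite _) hsub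
      _ = a' := by rw [SetLike.coe_sort_coe]
  have hsubC : (CH : Set G) * (CK : Set G)
      ⊆ ((Subgroup.centralizer ((H ⊓ K : Subgroup G) : Set G)) : Set G) := by
    have hCHle : CH ≤ Subgroup.centralizer ((H ⊓ K : Subgroup G) : Set G) :=
      Subgroup.centralizer_le (SetLike.coe_subset_coe.mpr inf_le_left)
    have hCKle : CK ≤ Subgroup.centralizer ((H ⊓ K : Subgroup G) : Set G) :=
      Subgroup.centralizer_le (SetLike.coe_subset_coe.mpr inf_le_right)
    rintro x ⟨y, hy, z, hz, rfl⟩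
    exact Subgroup.mul_mem _ (hCHle hy) (hCKle hz)
  have hbb' : b ≤ b' := by
    calc b ≤ Nat.card ((Subgroup.centralizer ((H ⊓ K : Subgroup G) : Set G) : Set G)) :=
          Nat.card_mono (Set.toFinite _) hsubC
      _ = b' := by rw [SetLike.coe_sort_coe]
  have hcpos : 0 < c := Nat.card_pos
  have hdpos : 0 < d := Nat.card_pos
  have hapos : 0 < a := by
    have h0 : 0 < a * c := h1 ▸ Nat.mul_pos Nat.card_pos Nat.card_pos
    exact Nat.pos_of_ne_zero fun hz => by rw [hz, zero_mul] at h0; exact lt_irrefl 0 h0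
  have hbpos : 0 < b := by
    have h0 : 0 < b * d := h2 ▸ Nat.mul_pos Nat.card_pos Nat.card_pos
    exact Nat.pos_of_ne_zero fun hz => by rw [hz, zero_mul] at h0; exact lt_irrefl 0 h0
  have hfH_eq : cdF H * cdF K = a * c * (b * d) := by
    rw [cdF, cdF, h1, h2]; ring
  have hfsup : cdF (H ⊔ K) = a' * d := rfl
  have hfinf : cdF (H ⊓ K) = c * b' := rfl
  -- second inequality : f(sup) * f(inf) ≤ f H * f K
  have key2 : a' * d * (c * b') ≤ a * c * (b * d) := by
    rw [← hfH_eq, ← hfsup, ← hfinf]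
    exact Nat.mul_le_mul (hfle _) (hfHK ▸ hfle (H ⊓ K))
  -- first inequality
  have key1 : a * c * (b * d) ≤ a' * d * (c * b') := by
    calc a * c * (b * d) ≤ a' * c * (b' * d) :=
          Nat.mul_le_mul (Nat.mul_le_mul haa' le_rfl) (Nat.mul_le_mul hbb' le_rfl)
      _ = a' * d * (c * b') := by ring
  have heq : a * c * (b * d) = a' * d * (c * b') := le_antisymm key1 key2
  -- derive a = a' and b = b'
  have e1 : a * (c * b * d) = a' * (c * b' * d) := by
    calc a * (c * b * d) = a * c * (b * d) := by ring
      _ = a' * d * (c * b') := heq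
      _ = a' * (c * b' * d) := by ring
  have e3 : a * (c * b * d) ≤ a' * (c * b * d) := Nat.mul_le_mul haa' le_rfl
  have e5 : a' * (c * b * d) ≤ a * (c * b * d) := by
    calc a' * (c * b * d) ≤ a' * (c * b' * d) :=
          Nat.mul_le_mul le_rfl (Nat.mul_le_mul (Nat.mul_le_mul le_rfl hbb') le_rfl)
      _ = a * (c * b * d) := e1.symm
  have hcbd : 0 < c * b * d := Nat.mul_pos (Nat.mul_pos hcpos hbpos) hdpos
  have ha' : a = a' := Nat.eq_of_mul_eq_mul_right hcbd (le_antisymm e3 e5)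
  have hbb : b = b' := by
    rw [ha'] at e1
    have := Nat.eq_of_mul_eq_mul_left (lt_of_lt_of_le hapos (le_of_eq ha')) e1
    have h6 : c * (b * d) = c * (b' * d) := by
      calc c * (b * d) = c * b * d := by ring
        _ = c * b' * d := this
        _ = c * (b' * d) := by ring
    have h7 := Nat.eq_of_mul_eq_mul_left hcpos h6
    exact Nat.eq_of_mul_eq_mul_right hdpos h7
  -- set equality
  have hset : ((H ⊔ K : Subgroup G) : Set G) = (H : Set G) * (K : Set G) := by
    symm
    apply Set.eq_of_subset_of_ncard_le hsub _ (Set.toFinite _)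
    have e : ((H ⊔ K : Subgroup G) : Set G).ncard = ((H : Set G) * (K : Set G)).ncard := by
      rw [← Nat.card_coe_set_eq, ← Nat.card_coe_set_eq, SetLike.coe_sort_coe]
      exact ha'.symm
    exact le_of_eq e
  refine ⟨hset, ?_⟩
  -- measure equality
  have hprod : cdF (H ⊔ K) * cdF (H ⊓ K) = cdF H * cdF K := by
    rw [hfsup, hfinf, hfH_eq, ← ha', ← hbb]; ring
  have hfKpos : 0 < cdF K := Nat.mul_pos Nat.card_pos Nat.card_pos
  have hfsup_eq : cdF (H ⊔ K) = cdF H := by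
    have hle1 : cdF (H ⊔ K) ≤ cdF H := hfle _
    have h8 : cdF H * cdF K ≤ cdF (H ⊔ K) * cdF K := by
      calc cdF H * cdF K = cdF (H ⊔ K) * cdF (H ⊓ K) := hprod.symm
        _ ≤ cdF (H ⊔ K) * cdF K := Nat.mul_le_mul le_rfl (hfHK ▸ hfle (H ⊓ K))
    exact le_antisymm hle1 (Nat.le_of_mul_le_mul_right h8 hfKpos)
  have hfHpos : 0 < cdF H := Nat.mul_pos Nat.card_pos Nat.card_pos
  have hfin : cdMeasure (H ⊔ K) * cdF H = cdMu G * cdF H := by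
    rw [← hfsup_eq, cd_measure_mul_cdF, hfsup_eq, hμH]
  exact Nat.eq_of_mul_eq_mul_right hfHpos hfin
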